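/- For all j ≤ min(l, m-l), the identity 2^{2j} * C(m; m-j-l, 2j, l-j) / (2j+1) = C(m,l) * ((-l)_j * (-(m-l))_j) / ((3/2)_j * j!) holds as an equation of rational numbers. -/

import Mathlib

open Finset

lemma asc_neg_nat (n : ℕ) : ∀ j ≤ n,
    (ascPochhammer ℚ j).eval (-(n : ℚ)) = (-1) ^ j * n.factorial / (n - j).factorial := by
  intro j hj
  induction j with
  | zero => simp [div_self (by positivity : ((n.factorial : ℚ)) ≠ 0)]
  | succ k ih =>
    rw [ascPochhammer_succ_right]
    have hk : k ≤ n := Nat.le_of_succ_le hj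
    simp only [Polynomial.eval_mul, ih hk, Polynomial.eval_add, Polynomial.eval_X,
      Polynomial.eval_natCast]
    have h1 : (n - k : ℕ) = (n - (k+1) : ℕ) + 1 := by omega
    have h2 : ((n - k : ℕ).factorial : ℚ) = ((n - (k+1) : ℕ) + 1) * (n - (k+1) : ℕ).factorial := by
      rw [h1, Nat.factorial_succ]; push_cast; ring
    have h3 : ((n - (k+1) : ℕ) : ℚ) + 1 = (n : ℚ) - k := by
      have : ((n - (k+1) : ℕ) : ℚ) = (n : ℚ) - (k+1) := by
        push_cast [Nat.cast_sub hj]; ring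
      rw [this]; ring
    have hne : ((n - (k+1) : ℕ).factorial : ℚ) ≠ 0 := by positivity
    have hne2 : (n : ℚ) - k ≠ 0 := by
      rw [← h3]; positivity
    rw [h2, h3]
    field_simp
    ring

lemma asc_three_half (j : ℕ) :
    (ascPochhammer ℚ j).eval (3 / 2) = ((2 * j + 1).factorial : ℚ) / (4 ^ j * j.factorial) := by
  induction j with
  | zero => simp
  | succ k ih =>
    rw [ascPochhammer_succ_right]
    simp only [Polynomial.eval_mul, ih, Polynomial.eval_add, Polynomial.eval_X,
      Polynomial.eval_natCast]
    have h1 : (2 * (k+1) + 1).factorial = (2*k+3) * ((2*k+2) * (2*k+1).factorial) := by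
      have : 2 * (k+1) + 1 = (2*k+1) + 1 + 1 := by ring
      rw [this, Nat.factorial_succ, Nat.factorial_succ]
    have h1' : (((2 * (k+1) + 1).factorial : ℕ) : ℚ) = (2*k+3) * ((2*k+2) * (2*k+1).factorial) := by
      rw [h1]; push_cast; ring
    have h2' : (((k+1).factorial : ℕ) : ℚ) = (k+1) * k.factorial := by
      rw [Nat.factorial_succ]; push_cast; ring
    rw [h1', h2']
    have h4 : ((2*k+1).factorial : ℚ) ≠ 0 := by positivity
    have hk : (k.factorial : ℚ) ≠ 0 := by positivity
    have h5 : (4:ℚ)^k ≠ 0 := by positivity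
    have h6 : ((k:ℚ)+1) ≠ 0 := by positivity
    field_simp
    ring

theorem trinomial_term_eq_hypergeometric_term (m l j : ℕ) (hlm : l ≤ m)
    (hj : j ≤ min l (m - l)) :
    (2 : ℚ) ^ (2 * j) *
        ((m.factorial : ℚ) /
          (((m - j - l).factorial : ℚ) * ((2 * j).factorial : ℚ) * ((l - j).factorial : ℚ)))
        / (2 * (j : ℚ) + 1)
      = (m.choose l : ℚ) *
          ((ascPochhammer ℚ j).eval (-(l : ℚ)) * (ascPochhammer ℚ j).eval (-((m : ℚ) - (l : ℚ))))
          / ((ascPochhammer ℚ j).eval (3 / 2) * (j.factorial : ℚ)) := by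
  have hjl : j ≤ l := le_trans hj (min_le_left _ _)
  have hjml : j ≤ m - l := le_trans hj (min_le_right _ _)
  have hml : ((m : ℚ) - l) = ((m - l : ℕ) : ℚ) := by push_cast [Nat.cast_sub hlm]; ring
  rw [hml, asc_neg_nat l j hjl, asc_neg_nat (m - l) j hjml, asc_three_half]
  rw [Nat.cast_choose ℚ hlm]
  have hmjl : m - j - l = m - l - j := by omega
  rw [hmjl]
  have hfac : ((2*j+1).factorial : ℚ) = (2 * (j:ℚ) + 1) * (2*j).factorial := by
    rw [Nat.factorial_succ]; push_cast; ring
  rw [hfac]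
  have h22 : (2:ℚ)^(2*j) = 4^j := by rw [pow_mul]; norm_num
  rw [h22]
  have hsq : ((-1:ℚ)^j) * ((-1:ℚ)^j) = 1 := by
    rw [← pow_add, ← two_mul, pow_mul]; norm_num
  have ne1 : ((m - l - j).factorial : ℚ) ≠ 0 := by positivity
  have ne2 : ((2*j).factorial : ℚ) ≠ 0 := by positivity
  have ne3 : ((l - j).factorial : ℚ) ≠ 0 := by positivity
  have ne4 : (2 * (j:ℚ) + 1) ≠ 0 := by positivity
  have ne5 : ((l).factorial : ℚ) ≠ 0 := by positivity
  have ne6 : ((m - l).factorial : ℚ) ≠ 0 := by positivity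
  have ne7 : ((j).factorial : ℚ) ≠ 0 := by positivity
  have ne8 : (4:ℚ)^j ≠ 0 := by positivity
  field_simp
  ring_nf
  have hneg : ((-1:ℚ))^(j*2) = 1 := by rw [mul_comm j 2, pow_mul]; norm_num
  rw [hneg]
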